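/- Let βv, μv > 0, let β, γ : [0, ∞) → [0, ∞) be continuous with β integrable on [0, ∞), and let p∞ : [0, ∞) → [0, ∞) be measurable with ∫_0^∞ p∞(a) da = 1. For B > 0 set κ(B) := βv·B/(μv+βv·B), s_B(a) := exp(−κ(B)·∫_0^a β(h) dh), i_B(a) := κ(B)·∫_0^a exp(−∫_τ^a γ(h) dh)·β(τ)·s_B(τ) dτ, and H(B) := ∫_0^∞ p∞(a)·i_B(a) da. Then H(B) < 1 for every B > 0. -/
import Mathlib


open MeasureTheory

/-- Effective transmission factor `κ(B) = βv·B/(μv+βv·B)`. -/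
noncomputable def kappaFn (βv μv B : ℝ) : ℝ := βv * B / (μv + βv * B)

/-- Steady-state susceptible age profile `s_B`. -/
noncomputable def sProf (βv μv : ℝ) (β : ℝ → ℝ) (B a : ℝ) : ℝ :=
  Real.exp (-(kappaFn βv μv B * ∫ h in (0 : ℝ)..a, β h))

/-- Steady-state infected age profile `i_B`. -/
noncomputable def iProf (βv μv : ℝ) (β γ : ℝ → ℝ) (B a : ℝ) : ℝ :=
  kappaFn βv μv B * ∫ τ in (0 : ℝ)..a,
    Real.exp (-∫ h in τ..a, γ h) * β τ * sProf βv μv β B τ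

/-- Force-of-infection map `H(B) = ∫_0^∞ p∞(a)·i_B(a) da`. -/
noncomputable def Hmap (βv μv : ℝ) (β γ pinf : ℝ → ℝ) (B : ℝ) : ℝ :=
  ∫ a in Set.Ioi (0 : ℝ), pinf a * iProf βv μv β γ B a

/-- Basic reproductive number `R0`. -/
noncomputable def R0 (βv μv : ℝ) (β γ pinf : ℝ → ℝ) : ℝ :=
  (βv / μv) * ∫ a in Set.Ioi (0 : ℝ),
    pinf a * ∫ τ in (0 : ℝ)..a, β τ * Real.exp (-∫ h in τ..a, γ h)

/-- the force-of-infection map satisfies `H(B) < 1` for every `B > 0`. -/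
theorem H_lt_one
    (βv μv : ℝ) (hβv : 0 < βv) (hμv : 0 < μv)
    (β γ : ℝ → ℝ) (hβ_cont : ContinuousOn β (Set.Ici 0)) (hγ_cont : ContinuousOn γ (Set.Ici 0))
    (hβ_nonneg : ∀ a : ℝ, 0 ≤ a → 0 ≤ β a) (hγ_nonneg : ∀ a : ℝ, 0 ≤ a → 0 ≤ γ a)
    (hβ_int : MeasureTheory.IntegrableOn β (Set.Ioi 0))
    (pinf : ℝ → ℝ) (hp_meas : Measurable pinf) (hp_nonneg : ∀ a : ℝ, 0 ≤ a → 0 ≤ pinf a)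
    (hp_int : ∫ a in Set.Ioi (0 : ℝ), pinf a = 1)
    : ∀ B : ℝ, 0 < B → Hmap βv μv β γ pinf B < 1 := by
  intro B hB
  set κ := kappaFn βv μv B with hκdef
  have hκpos : 0 < κ := by
    have h1 : 0 < βv * B := mul_pos hβv hB
    have h2 : 0 < μv + βv * B := by linarith
    exact div_pos h1 h2
  set M := ∫ a in Set.Ioi (0:ℝ), β a with hMdef
  set c := Real.exp (-(κ * M)) with hcdef
  have hc0 : 0 < c := Real.exp_pos _
  -- β continuous and integrable on [0,a]
  have hβcont' : ∀ a : ℝ, 0 ≤ a → ContinuousOn β (Set.Icc 0 a) :=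
    fun a ha => hβ_cont.mono (fun x hx => hx.1)
  have hβii : ∀ a : ℝ, 0 ≤ a → IntervalIntegrable β MeasureTheory.volume 0 a := by
    intro a ha
    apply ContinuousOn.intervalIntegrable
    rw [Set.uIcc_of_le ha]
    exact hβcont' a ha
  -- G := primitive of β
  have hGle : ∀ a : ℝ, 0 ≤ a → (∫ h in (0:ℝ)..a, β h) ≤ M := by
    intro a ha
    rw [intervalIntegral.integral_of_le ha]
    apply setIntegral_mono_set hβ_int
    · filter_upwards [ae_restrict_mem measurableSet_Ioi] with x hx
      exact hβ_nonneg x (le_of_lt hx)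
    · exact (Set.Ioc_subset_Ioi_self).eventuallyLE
  have hGcont : ∀ a : ℝ, 0 ≤ a →
      ContinuousOn (fun τ => ∫ h in (0:ℝ)..τ, β h) (Set.Icc 0 a) := by
    intro a ha
    have h1 : IntegrableOn β (Set.uIcc 0 a) := by
      rw [Set.uIcc_of_le ha]
      exact (hβcont' a ha).integrableOn_Icc
    have := intervalIntegral.continuousOn_primitive_interval h1
    rwa [Set.uIcc_of_le ha] at this
  have hscont : ∀ a : ℝ, 0 ≤ a →
      ContinuousOn (fun τ => sProf βv μv β B τ) (Set.Icc 0 a) := by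
    intro a ha
    exact Real.continuous_exp.comp_continuousOn (((hGcont a ha).const_smul κ).neg)
  -- key FTC identity
  have key : ∀ a : ℝ, 0 ≤ a →
      (∫ τ in (0:ℝ)..a, κ * (β τ * sProf βv μv β B τ))
        = 1 - sProf βv μv β B a := by
    intro a ha
    have hderiv : ∀ x ∈ Set.Ioo (0:ℝ) a,
        HasDerivWithinAt (fun τ => -sProf βv μv β B τ)
          (κ * (β x * sProf βv μv β B x)) (Set.Ioi x) x := by
      intro x hx
      have hxpos : (0:ℝ) < x := hx.1
      have hcx : ContinuousAt β x :=
        hβ_cont.continuousAt (Ici_mem_nhds hxpos)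
      have hmeas : StronglyMeasurableAtFilter β (nhds x) :=
        ⟨Set.Ici 0, Ici_mem_nhds hxpos, hβ_cont.aestronglyMeasurable measurableSet_Ici⟩
      have hG : HasDerivAt (fun τ => ∫ h in (0:ℝ)..τ, β h) (β x) x :=
        intervalIntegral.integral_hasDerivAt_right (hβii x hxpos.le) hmeas hcx
      have h2 : HasDerivAt (fun τ => -(κ * ∫ h in (0:ℝ)..τ, β h)) (-(κ * β x)) x := by
        exact (hG.const_mul κ).neg
      have h3 := (h2.exp).neg
      have : -(Real.exp (-(κ * ∫ h in (0:ℝ)..x, β h)) * -(κ * β x))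
          = κ * (β x * sProf βv μv β B x) := by
        simp [sProf, ← hκdef]; ring
      rw [this] at h3
      exact h3.hasDerivWithinAt
    have hcont : ContinuousOn (fun τ => -sProf βv μv β B τ) (Set.Icc 0 a) :=
      (hscont a ha).neg
    have hint : IntervalIntegrable (fun τ => κ * (β τ * sProf βv μv β B τ))
        MeasureTheory.volume 0 a := by
      apply ContinuousOn.intervalIntegrable
      rw [Set.uIcc_of_le ha]
      exact (continuousOn_const.mul ((hβcont' a ha).mul (hscont a ha)))
    have := intervalIntegral.integral_eq_sub_of_hasDeriv_right_of_le ha hcont hderiv hint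
    rw [this]
    have hs0 : sProf βv μv β B 0 = 1 := by simp [sProf]
    rw [hs0]; ring
  -- lower bound on sProf
  have hslb : ∀ a : ℝ, 0 ≤ a → c ≤ sProf βv μv β B a := by
    intro a ha
    apply Real.exp_le_exp.2
    rw [neg_le_neg_iff, ← hκdef]
    exact mul_le_mul_of_nonneg_left (hGle a ha) hκpos.le
  -- upper bound on iProf
  have hib : ∀ a : ℝ, 0 ≤ a → iProf βv μv β γ B a ≤ 1 - c := by
    intro a ha
    have hγint : IntegrableOn γ (Set.uIcc 0 a) := by
      rw [Set.uIcc_of_le ha]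
      exact (hγ_cont.mono (fun x hx => hx.1)).integrableOn_Icc
    have hecont : ContinuousOn (fun τ => Real.exp (-∫ h in τ..a, γ h)) (Set.Icc 0 a) := by
      have := intervalIntegral.continuousOn_primitive_interval_left hγint
      rw [Set.uIcc_of_le ha] at this
      exact Real.continuous_exp.comp_continuousOn this.neg
    have hf_int : IntervalIntegrable
        (fun τ => Real.exp (-∫ h in τ..a, γ h) * β τ * sProf βv μv β B τ)
        MeasureTheory.volume 0 a := by
      apply ContinuousOn.intervalIntegrable
      rw [Set.uIcc_of_le ha]
      exact (hecont.mul (hβcont' a ha)).mul (hscont a ha)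
    have hg_int : IntervalIntegrable (fun τ => β τ * sProf βv μv β B τ)
        MeasureTheory.volume 0 a := by
      apply ContinuousOn.intervalIntegrable
      rw [Set.uIcc_of_le ha]
      exact (hβcont' a ha).mul (hscont a ha)
    have hmono : (∫ τ in (0:ℝ)..a, Real.exp (-∫ h in τ..a, γ h) * β τ * sProf βv μv β B τ)
        ≤ ∫ τ in (0:ℝ)..a, β τ * sProf βv μv β B τ := by
      apply intervalIntegral.integral_mono_on ha hf_int hg_int
      intro x hx
      have hγnn : 0 ≤ ∫ h in x..a, γ h := by
        apply intervalIntegral.integral_nonneg hx.2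
        intro u hu
        exact hγ_nonneg u (le_trans hx.1 hu.1)
      have he1 : Real.exp (-∫ h in x..a, γ h) ≤ 1 := by
        rw [← Real.exp_zero]
        exact Real.exp_le_exp.2 (by linarith)
      have hbs : 0 ≤ β x * sProf βv μv β B x :=
        mul_nonneg (hβ_nonneg x hx.1) (Real.exp_pos _).le
      calc Real.exp (-∫ h in x..a, γ h) * β x * sProf βv μv β B x
          = Real.exp (-∫ h in x..a, γ h) * (β x * sProf βv μv β B x) := by ring
        _ ≤ 1 * (β x * sProf βv μv β B x) := mul_le_mul_of_nonneg_right he1 hbs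
        _ = β x * sProf βv μv β B x := one_mul _
    calc iProf βv μv β γ B a
        ≤ κ * ∫ τ in (0:ℝ)..a, β τ * sProf βv μv β B τ := by
          rw [iProf, ← hκdef]
          exact mul_le_mul_of_nonneg_left hmono hκpos.le
      _ = ∫ τ in (0:ℝ)..a, κ * (β τ * sProf βv μv β B τ) := by
          rw [← intervalIntegral.integral_const_mul]
      _ = 1 - sProf βv μv β B a := key a ha
      _ ≤ 1 - c := by linarith [hslb a ha]
  -- iProf nonneg
  have hinn : ∀ a : ℝ, 0 ≤ a → 0 ≤ iProf βv μv β γ B a := by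
    intro a ha
    rw [iProf, ← hκdef]
    apply mul_nonneg hκpos.le
    apply intervalIntegral.integral_nonneg ha
    intro u hu
    exact mul_nonneg (mul_nonneg (Real.exp_pos _).le (hβ_nonneg u hu.1)) (Real.exp_pos _).le
  -- pinf integrable
  have hpint : Integrable pinf (MeasureTheory.volume.restrict (Set.Ioi (0:ℝ))) := by
    by_contra h
    rw [integral_undef h] at hp_int
    norm_num at hp_int
  have hfinal : Hmap βv μv β γ pinf B ≤ 1 - c := by
    have hle : (∫ a in Set.Ioi (0:ℝ), pinf a * iProf βv μv β γ B a)
        ≤ ∫ a in Set.Ioi (0:ℝ), pinf a * (1 - c) := by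
      apply integral_mono_of_nonneg
      · filter_upwards [ae_restrict_mem measurableSet_Ioi] with x hx
        exact mul_nonneg (hp_nonneg x (le_of_lt hx)) (hinn x (le_of_lt hx))
      · exact hpint.mul_const _
      · filter_upwards [ae_restrict_mem measurableSet_Ioi] with x hx
        exact mul_le_mul_of_nonneg_left (hib x (le_of_lt hx)) (hp_nonneg x (le_of_lt hx))
    have : (∫ a in Set.Ioi (0:ℝ), pinf a * (1 - c)) = 1 - c := by
      rw [integral_mul_const, hp_int, one_mul]
    rw [Hmap]
    calc (∫ a in Set.Ioi (0:ℝ), pinf a * iProf βv μv β γ B a) ≤ _ := hle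
      _ = 1 - c := this
  linarith
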